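/- Gaussian Berezin integral formula: for a real (or complex) antisymmetric 2n×2n matrix A, the Berezin integral of exp(½ Σ_{ij} θ_i A_{ij} θ_j) over the Grassmann generators θ₁,…,θ_{2n} equals the Pfaffian of A: ∫ exp(½ θᵀAθ) dθ_{2n}⋯dθ₁ = Pf(A). Equivalently, in the exterior algebra Λ(ℂ^{2n}), if a = Σ_{i<j} A_{ij} e_i ∧ e_j, then the coefficient of e₁∧⋯∧e_{2n} in (1/n!) aⁿ equals Pf(A). -/

import Mathlib

open Matrix

/-- The ordered monomial `x_I = x_{i_1} * ... * x_{i_k}` associated with a finite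
index set `I = {i_1 < ... < i_k}`. -/
def gmonomial {A : Type*} [Ring A] {m : ℕ} (x : Fin m → A) (I : Finset (Fin m)) : A :=
  ((I.sort (· ≤ ·)).map x).prod

/-- The Pfaffian of a `2n x 2n` matrix, via
`Pf(A) = (1/(2^n n!)) * sum_sigma sgn(sigma) * prod_i A_{sigma(2i), sigma(2i+1)}`. -/
noncomputable def pfaffian {n : ℕ} (A : Matrix (Fin (2 * n)) (Fin (2 * n)) ℂ) : ℂ :=
  (1 / ((2 : ℂ) ^ n * (n.factorial : ℂ))) *
    ∑ σ : Equiv.Perm (Fin (2 * n)),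
      ((Equiv.Perm.sign σ : ℤ) : ℂ) *
        ∏ i : Fin n,
          A (σ ⟨2 * (i : ℕ), by omega⟩) (σ ⟨2 * (i : ℕ) + 1, by omega⟩)

section Helpers

variable {A : Type*} [Ring A]

private lemma move_or (u : A) : ∀ (l : List A), (∀ b ∈ l, u * b = -(b * u)) →
    u * l.prod = l.prod * u ∨ u * l.prod = -(l.prod * u)
  | [], _ => Or.inl (by simp)
  | b :: l, h => by
    have hb : u * b = -(b * u) := h b (List.mem_cons_self)
    have ih := move_or u l fun c hc => h c (List.mem_cons_of_mem _ hc)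
    simp only [List.prod_cons]
    have step : u * (b * l.prod) = -(b * (u * l.prod)) := by
      rw [← mul_assoc, hb, neg_mul, mul_assoc]
    rcases ih with h1 | h1
    · right
      rw [step, h1, mul_assoc]
    · left
      rw [step, h1, mul_neg, neg_neg, mul_assoc]

private lemma prod_eq_zero_aux (u : A) (hsq : u * u = 0) (l1 l2 l3 : List A)
    (h : ∀ b ∈ l2, u * b = -(b * u)) : (l1 ++ u :: (l2 ++ u :: l3)).prod = 0 := by
  have huu : ∀ r : A, u * (u * r) = 0 := fun r => by rw [← mul_assoc, hsq, zero_mul]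
  simp only [List.prod_append, List.prod_cons]
  rcases move_or u l2 h with h1 | h1
  · rw [← mul_assoc u l2.prod, h1, mul_assoc l2.prod, huu, mul_zero, mul_zero]
  · rw [← mul_assoc u l2.prod, h1, neg_mul, mul_assoc l2.prod, huu, mul_zero, neg_zero,
      mul_zero]

private lemma ofFn_prod_eq_zero {m k : ℕ} (θ : Fin m → A)
    (hθ : ∀ i j, θ i * θ j = -(θ j * θ i)) (hθ0 : ∀ i, θ i * θ i = 0)
    (f : Fin k → Fin m) (i j : Fin k) (hij : i < j) (hf : f i = f j) :
    (List.ofFn fun r => θ (f r)).prod = 0 := by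
  set l := List.ofFn fun r => θ (f r) with hl
  have hlen : l.length = k := by simp [hl]
  have hi : (i : ℕ) < l.length := by rw [hlen]; exact i.isLt
  have hj : (j : ℕ) < l.length := by rw [hlen]; exact j.isLt
  have g1 : l.drop (i : ℕ) = θ (f i) :: l.drop ((i : ℕ) + 1) := by
    rw [List.drop_eq_getElem_cons hi]
    congr 1
    simp [hl]
  have g2 : (l.drop ((i : ℕ) + 1)).drop ((j : ℕ) - ((i : ℕ) + 1))
      = θ (f i) :: l.drop ((j : ℕ) + 1) := by
    rw [List.drop_drop]
    have hx : ((i : ℕ) + 1) + ((j : ℕ) - ((i : ℕ) + 1)) = (j : ℕ) := by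
      have := hij
      rw [Fin.lt_def] at this
      omega
    rw [hx, List.drop_eq_getElem_cons hj]
    congr 1
    simp [hl, hf]
  have e1 : l = l.take (i : ℕ) ++ θ (f i) ::
      ((l.drop ((i : ℕ) + 1)).take ((j : ℕ) - ((i : ℕ) + 1)) ++ θ (f i) ::
        l.drop ((j : ℕ) + 1)) := by
    conv_lhs => rw [← List.take_append_drop (i : ℕ) l, g1,
      ← List.take_append_drop ((j : ℕ) - ((i : ℕ) + 1)) (l.drop ((i : ℕ) + 1)), g2]
  rw [e1]
  apply prod_eq_zero_aux (θ (f i)) (hθ0 _)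
  intro b hb
  have hb' : b ∈ l := List.drop_subset _ l (List.take_subset _ _ hb)
  rw [hl] at hb'
  obtain ⟨r, hr⟩ := List.mem_ofFn.1 hb'
  rw [← hr]
  exact hθ _ _

private lemma perm_prod_or {ι' : Type*} (θ : ι' → A)
    (hθ : ∀ i j, θ i * θ j = -(θ j * θ i)) {l1 l2 : List ι'} (h : l1.Perm l2) :
    (l1.map θ).prod = (l2.map θ).prod ∨ (l1.map θ).prod = -((l2.map θ).prod) := by
  induction h with
  | nil => exact Or.inl rfl
  | cons x h ih =>
    simp only [List.map_cons, List.prod_cons]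
    rcases ih with h1 | h1
    · exact Or.inl (by rw [h1])
    · exact Or.inr (by rw [h1, mul_neg])
  | swap x y l =>
    simp only [List.map_cons, List.prod_cons]
    right
    rw [← mul_assoc, hθ y x, neg_mul, mul_assoc]
  | trans h1 h2 ih1 ih2 =>
    rcases ih1 with e1 | e1 <;> rcases ih2 with e2 | e2
    · exact Or.inl (e1.trans e2)
    · exact Or.inr (by rw [e1, e2])
    · exact Or.inr (by rw [e1, e2])
    · exact Or.inl (by rw [e1, e2, neg_neg])

private lemma nodup_map_prod {m : ℕ} (θ : Fin m → A)
    (hθ : ∀ i j, θ i * θ j = -(θ j * θ i)) (l : List (Fin m)) (hl : l.Nodup) :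
    (l.map θ).prod = gmonomial θ l.toFinset ∨
      (l.map θ).prod = -(gmonomial θ l.toFinset) := by
  have hperm : l.Perm (l.toFinset.sort (· ≤ ·)) := by
    apply List.perm_of_nodup_nodup_toFinset_eq hl (Finset.sort_nodup _ _)
    rw [Finset.sort_toFinset]
  exact perm_prod_or θ hθ hperm

private lemma gmonomial_univ {m : ℕ} (θ : Fin m → A) :
    gmonomial θ (Finset.univ : Finset (Fin m)) = (List.ofFn θ).prod := by
  rw [gmonomial, List.ofFn_eq_map]
  congr 1
  exact congrArg (List.map θ) (Fin.sort_univ m)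


private lemma flat_length {ι' : Type*} :
    ∀ (l : List (ι' × ι')), (l.flatMap fun p => [p.1, p.2]).length = 2 * l.length
  | [] => by simp
  | p :: l => by
    simp only [List.flatMap_cons, List.length_append, List.length_cons, flat_length l,
      List.length_nil]
    omega

private lemma flat_getElem_even {ι' : Type*} :
    ∀ (l : List (ι' × ι')) (i : ℕ) (hi : i < l.length)
      (h2 : 2 * i < (l.flatMap fun p => [p.1, p.2]).length),
      (l.flatMap fun p => [p.1, p.2])[2 * i]'h2 = (l[i]'hi).1
  | p :: l, 0, hi, h2 => by simp
  | p :: l, i + 1, hi, h2 => by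
    have e : 2 * (i + 1) = 2 * i + 1 + 1 := by ring
    simp only [List.flatMap_cons, List.cons_append, List.nil_append, e,
      List.getElem_cons_succ]
    have hi' : i < l.length := by simpa using hi
    exact flat_getElem_even l i hi' (by rw [flat_length l]; omega)

private lemma flat_getElem_odd {ι' : Type*} :
    ∀ (l : List (ι' × ι')) (i : ℕ) (hi : i < l.length)
      (h2 : 2 * i + 1 < (l.flatMap fun p => [p.1, p.2]).length),
      (l.flatMap fun p => [p.1, p.2])[2 * i + 1]'h2 = (l[i]'hi).2
  | p :: l, 0, hi, h2 => by simp
  | p :: l, i + 1, hi, h2 => by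
    have e : 2 * (i + 1) + 1 = (2 * i + 1) + 1 + 1 := by ring
    simp only [List.flatMap_cons, List.cons_append, List.nil_append, e,
      List.getElem_cons_succ]
    have hi' : i < l.length := by simpa using hi
    exact flat_getElem_odd l i hi' (by rw [flat_length l]; omega)

private lemma flat_map_prod {ι' : Type*} (θ : ι' → A) :
    ∀ (l : List (ι' × ι')),
      ((l.flatMap fun p => [p.1, p.2]).map θ).prod = (l.map fun p => θ p.1 * θ p.2).prod
  | [] => by simp
  | p :: l => by
    simp only [List.flatMap_cons, List.map_append, List.map_cons, List.prod_append,
      List.prod_cons, List.map_nil, List.prod_nil, flat_map_prod θ l]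
    rw [mul_one, mul_assoc]

private lemma not_nodup_decomp {ι' : Type*} :
    ∀ (l : List ι'), ¬ l.Nodup → ∃ u l1 l2 l3, l = l1 ++ u :: (l2 ++ u :: l3)
  | [], h => absurd List.nodup_nil h
  | a :: l, h => by
    by_cases hl : l.Nodup
    · have ha : a ∈ l := by
        by_contra hm
        exact h (List.nodup_cons.2 ⟨hm, hl⟩)
      obtain ⟨s, t, hst⟩ := List.append_of_mem ha
      exact ⟨a, [], s, t, by rw [hst]; simp⟩
    · obtain ⟨u, l1, l2, l3, hdec⟩ := not_nodup_decomp l hl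
      exact ⟨u, a :: l1, l2, l3, by rw [hdec]; simp⟩

private lemma prod_eq_zero_of_not_nodup (l : List A) (hnd : ¬ l.Nodup)
    (hsq : ∀ b ∈ l, b * b = 0) (hanti : ∀ b ∈ l, ∀ c ∈ l, b * c = -(c * b)) :
    l.prod = 0 := by
  obtain ⟨u, l1, l2, l3, hdec⟩ := not_nodup_decomp l hnd
  have hu : u ∈ l := by rw [hdec]; simp
  rw [hdec]
  apply prod_eq_zero_aux u (hsq u hu)
  intro b hb
  have hb' : b ∈ l := by rw [hdec]; simp [hb]
  exact hanti u hu b hb'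

variable [Algebra ℂ A]

/-- The linear map `v ↦ ∑ i, v i • θ i`. -/
private def linθ {m : ℕ} (θ : Fin m → A) : (Fin m → ℂ) →ₗ[ℂ] A where
  toFun v := ∑ i, v i • θ i
  map_add' u v := by simp [add_smul, Finset.sum_add_distrib]
  map_smul' c v := by simp [smul_smul, Finset.smul_sum]

private lemma linθ_single {m : ℕ} (θ : Fin m → A) (i : Fin m) :
    linθ θ (Pi.single i 1) = θ i := by
  simp [linθ, Pi.single_apply, ite_smul]

private lemma linθ_mul_expand {m : ℕ} (θ : Fin m → A) (u w : Fin m → ℂ) :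
    linθ θ u * linθ θ w = ∑ p : Fin m × Fin m, (u p.1 * w p.2) • (θ p.1 * θ p.2) := by
  simp only [linθ, LinearMap.coe_mk, AddHom.coe_mk]
  rw [Finset.sum_mul_sum, Fintype.sum_prod_type]
  congr 1; funext i; congr 1; funext j
  rw [smul_mul_smul_comm]

private lemma linθ_anti {m : ℕ} (θ : Fin m → A)
    (hθ : ∀ i j, θ i * θ j = -(θ j * θ i)) (u w : Fin m → ℂ) :
    linθ θ u * linθ θ w = -(linθ θ w * linθ θ u) := by
  rw [linθ_mul_expand, linθ_mul_expand, ← Finset.sum_neg_distrib]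
  apply Fintype.sum_equiv (Equiv.prodComm _ _)
  intro p
  simp only [Equiv.prodComm_apply, Prod.fst_swap, Prod.snd_swap]
  rw [hθ p.2 p.1, smul_neg, neg_neg, mul_comm]

private lemma linθ_sq {m : ℕ} (θ : Fin m → A)
    (hθ : ∀ i j, θ i * θ j = -(θ j * θ i)) (u : Fin m → ℂ) :
    linθ θ u * linθ θ u = 0 := by
  rw [linθ_mul_expand]
  have hswap : ∑ p : Fin m × Fin m, (u p.1 * u p.2) • (θ p.1 * θ p.2)
      = ∑ p : Fin m × Fin m, (u p.2 * u p.1) • (θ p.2 * θ p.1) :=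
    Fintype.sum_equiv (Equiv.prodComm _ _) _ _ (fun p => rfl)
  have h2 : (∑ p : Fin m × Fin m, (u p.1 * u p.2) • (θ p.1 * θ p.2))
      + (∑ p : Fin m × Fin m, (u p.1 * u p.2) • (θ p.1 * θ p.2)) = 0 := by
    nth_rewrite 2 [hswap]
    rw [← Finset.sum_add_distrib]
    apply Finset.sum_eq_zero
    intro p _
    rw [hθ p.2 p.1, smul_neg, mul_comm (u p.2), add_neg_cancel]
  have h3 : (2 : ℂ) • (∑ p : Fin m × Fin m, (u p.1 * u p.2) • (θ p.1 * θ p.2)) = 0 := by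
    rw [two_smul]; exact h2
  calc (∑ p : Fin m × Fin m, (u p.1 * u p.2) • (θ p.1 * θ p.2))
      = (2⁻¹ : ℂ) • ((2 : ℂ) • (∑ p : Fin m × Fin m, (u p.1 * u p.2) • (θ p.1 * θ p.2))) := by
        rw [smul_smul]; norm_num
    _ = 0 := by rw [h3, smul_zero]

/-- The alternating map `v ↦ (∑ v 1 i • θ i) * ... * (∑ v m i • θ i)`. -/
private noncomputable def altθ {m : ℕ} (θ : Fin m → A)
    (hθ : ∀ i j, θ i * θ j = -(θ j * θ i)) :
    AlternatingMap ℂ (Fin m → ℂ) A (Fin m) where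
  toMultilinearMap :=
    (MultilinearMap.mkPiAlgebraFin ℂ m A).compLinearMap (fun _ => linθ θ)
  map_eq_zero_of_eq' := by
    intro v i j hveq hne
    show (MultilinearMap.mkPiAlgebraFin ℂ m A) (fun r => linθ θ (v r)) = 0
    rw [MultilinearMap.mkPiAlgebraFin_apply]
    have key : ∀ (i j : Fin m), i < j → v i = v j →
        (List.ofFn fun r => linθ θ (v r)).prod = 0 := by
      intro i j hij hveq
      set l := List.ofFn fun r => linθ θ (v r) with hl
      have hi : (i : ℕ) < l.length := by simp [hl]
      have hj : (j : ℕ) < l.length := by simp [hl]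
      have g1 : l.drop (i : ℕ) = linθ θ (v i) :: l.drop ((i : ℕ) + 1) := by
        rw [List.drop_eq_getElem_cons hi]; congr 1; simp [hl]
      have g2 : (l.drop ((i : ℕ) + 1)).drop ((j : ℕ) - ((i : ℕ) + 1))
          = linθ θ (v i) :: l.drop ((j : ℕ) + 1) := by
        rw [List.drop_drop]
        have hx : ((i : ℕ) + 1) + ((j : ℕ) - ((i : ℕ) + 1)) = (j : ℕ) := by
          have := hij; rw [Fin.lt_def] at this; omega
        rw [hx, List.drop_eq_getElem_cons hj]
        congr 1
        simp [hl, hveq]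
      have e1 : l = l.take (i : ℕ) ++ linθ θ (v i) ::
          ((l.drop ((i : ℕ) + 1)).take ((j : ℕ) - ((i : ℕ) + 1)) ++ linθ θ (v i) ::
            l.drop ((j : ℕ) + 1)) := by
        conv_lhs => rw [← List.take_append_drop (i : ℕ) l, g1,
          ← List.take_append_drop ((j : ℕ) - ((i : ℕ) + 1)) (l.drop ((i : ℕ) + 1)), g2]
      rw [e1]
      apply prod_eq_zero_aux _ (linθ_sq θ hθ (v i))
      intro b hb
      have hb' : b ∈ l := List.drop_subset _ l (List.take_subset _ _ hb)
      rw [hl] at hb'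
      obtain ⟨r, hr⟩ := List.mem_ofFn.1 hb'
      rw [← hr]
      exact linθ_anti θ hθ _ _
    rcases lt_or_gt_of_ne hne with h | h
    · exact key i j h hveq
    · exact key j i h hveq.symm

private lemma sign_ofFn_prod {m : ℕ} (θ : Fin m → A)
    (hθ : ∀ i j, θ i * θ j = -(θ j * θ i)) (σ : Equiv.Perm (Fin m)) :
    (List.ofFn fun j => θ (σ j)).prod
      = ((Equiv.Perm.sign σ : ℤ) : ℂ) • (List.ofFn θ).prod := by
  have h1 : (altθ θ hθ) ((fun j => Pi.single j (1 : ℂ)) ∘ σ)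
      = (List.ofFn fun j => θ (σ j)).prod := by
    show (MultilinearMap.mkPiAlgebraFin ℂ m A)
        (fun r => linθ θ (Pi.single (σ r) (1 : ℂ))) = _
    rw [MultilinearMap.mkPiAlgebraFin_apply]
    simp only [linθ_single]
  have h2 : (altθ θ hθ) (fun j => Pi.single j (1 : ℂ)) = (List.ofFn θ).prod := by
    show (MultilinearMap.mkPiAlgebraFin ℂ m A)
        (fun r => linθ θ (Pi.single r (1 : ℂ))) = _
    rw [MultilinearMap.mkPiAlgebraFin_apply]
    simp only [linθ_single]
  have h3 := AlternatingMap.map_perm (g := altθ θ hθ) (fun j => Pi.single j (1 : ℂ)) σ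
  rw [h1, h2] at h3
  rw [h3, Units.smul_def, Int.cast_smul_eq_zsmul]

private lemma sum_pow_expand {ι : Type*} [Fintype ι] (x : ι → A) : ∀ (k : ℕ),
    (∑ p, x p) ^ k = ∑ t : Fin k → ι, (List.ofFn fun i => x (t i)).prod
  | 0 => by simp
  | k + 1 => by
    rw [pow_succ', sum_pow_expand x k, Finset.sum_mul_sum, ← Fintype.sum_prod_type']
    apply Fintype.sum_equiv (Fin.consEquiv (fun _ => ι))
    intro pt
    rw [List.ofFn_succ, List.prod_cons]
    simp [Fin.consEquiv]

private lemma smul_ofFn_prod : ∀ (k : ℕ) (c : Fin k → ℂ) (y : Fin k → A),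
    (List.ofFn fun i => c i • y i).prod = (∏ i, c i) • (List.ofFn y).prod
  | 0, c, y => by simp
  | k + 1, c, y => by
    rw [List.ofFn_succ, List.ofFn_succ (f := y), List.prod_cons, List.prod_cons,
      smul_ofFn_prod k _ _, Fin.prod_univ_succ, smul_mul_smul_comm]

end Helpers

/-- Gaussian Berezin integral formula: for an antisymmetric `2n x 2n` matrix `A`,
the Berezin integral (extraction of the coefficient of the top monomial
`theta_1 ... theta_{2n}`) of `exp((1/2) theta^T A theta)` equals the Pfaffian of `A`.
Here `theta_1, ..., theta_{2n}` are anticommuting Grassmann generators and the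
exponential is the finite exponential series. -/
theorem gaussian_berezin_eq_pfaffian
    {A : Type*} [Ring A] [Algebra ℂ A] (n : ℕ)
    (M : Matrix (Fin (2 * n)) (Fin (2 * n)) ℂ) (hM : Mᵀ = -M)
    (θ : Fin (2 * n) → A)
    (hθ : ∀ i j, θ i * θ j = -(θ j * θ i)) (hθ0 : ∀ i, θ i * θ i = 0)
    (ber : A →ₗ[ℂ] ℂ)
    (hber : ∀ (c : ℂ) (I : Finset (Fin (2 * n))),
      ber (c • gmonomial θ I) = if I = Finset.univ then c else 0)
    (a : A) (ha : a = (1 / 2 : ℂ) • ∑ i, ∑ j, M i j • (θ i * θ j)) :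
    ber (∑ k ∈ Finset.range (n + 1), ((k.factorial : ℂ))⁻¹ • a ^ k) = pfaffian M := by
  classical
  -- abbreviations
  have hb : a = (1 / 2 : ℂ) • ∑ p : Fin (2 * n) × Fin (2 * n), M p.1 p.2 • (θ p.1 * θ p.2) := by
    rw [ha, ← Fintype.sum_prod_type']
  -- expansion of powers of `a`
  have hpow : ∀ k : ℕ, a ^ k = ((1 / 2 : ℂ)) ^ k •
      ∑ t : Fin k → Fin (2 * n) × Fin (2 * n),
        (∏ i, M (t i).1 (t i).2) •
          ((((List.ofFn t).flatMap fun p => [p.1, p.2]).map θ).prod) := by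
    intro k
    rw [hb, smul_pow, sum_pow_expand]
    congr 1
    apply Finset.sum_congr rfl
    intro t _
    rw [smul_ofFn_prod k (fun i => M (t i).1 (t i).2) (fun i => θ (t i).1 * θ (t i).2)]
    congr 1
    rw [flat_map_prod θ (List.ofFn t)]
    exact congrArg List.prod (List.map_ofFn (f := t) (g := fun p => θ p.1 * θ p.2)).symm
  -- length of flattened lists
  have hflen : ∀ {k : ℕ} (t : Fin k → Fin (2 * n) × Fin (2 * n)),
      ((List.ofFn t).flatMap fun p => [p.1, p.2]).length = 2 * k := by
    intro k t
    rw [flat_length, List.length_ofFn]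
  -- non-nodup lists give zero
  have hzero : ∀ {k : ℕ} (t : Fin k → Fin (2 * n) × Fin (2 * n)),
      ¬ ((List.ofFn t).flatMap fun p => [p.1, p.2]).Nodup →
      ((((List.ofFn t).flatMap fun p => [p.1, p.2]).map θ).prod) = 0 := by
    intro k t hnd
    apply prod_eq_zero_of_not_nodup
    · intro hnd'
      exact hnd hnd'.of_map
    · intro b hb
      obtain ⟨i0, _, rfl⟩ := List.mem_map.1 hb
      exact hθ0 _
    · intro b hb c hc
      obtain ⟨i0, _, rfl⟩ := List.mem_map.1 hb
      obtain ⟨j0, _, rfl⟩ := List.mem_map.1 hc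
      exact hθ _ _
  -- small powers vanish
  have hsmall : ∀ k : ℕ, k < n → ∀ t : Fin k → Fin (2 * n) × Fin (2 * n),
      ber ((∏ i, M (t i).1 (t i).2) •
        ((((List.ofFn t).flatMap fun p => [p.1, p.2]).map θ).prod)) = 0 := by
    intro k hk t
    by_cases hnd : ((List.ofFn t).flatMap fun p => [p.1, p.2]).Nodup
    · have hI : (((List.ofFn t).flatMap fun p => [p.1, p.2]).toFinset : Finset (Fin (2 * n)))
          ≠ Finset.univ := by
        intro hEq
        have := congrArg Finset.card hEq
        rw [List.toFinset_card_of_nodup hnd, hflen t, Finset.card_univ, Fintype.card_fin]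
          at this
        omega
      rcases nodup_map_prod θ hθ _ hnd with h1 | h1 <;> rw [h1]
      · rw [hber, if_neg hI]
      · rw [smul_neg, ← neg_smul, hber, if_neg hI]
    · rw [hzero t hnd, smul_zero, map_zero]
  -- the matching between sequences of pairs and permutations
  set T : Equiv.Perm (Fin (2 * n)) → (Fin n → Fin (2 * n) × Fin (2 * n)) :=
    fun σ i => (σ ⟨2 * (i : ℕ), by omega⟩, σ ⟨2 * (i : ℕ) + 1, by omega⟩) with hT
  have hLT : ∀ σ : Equiv.Perm (Fin (2 * n)),
      ((List.ofFn (T σ)).flatMap fun p => [p.1, p.2]) = List.ofFn ⇑σ := by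
    intro σ
    apply List.ext_getElem
    · rw [hflen (T σ), List.length_ofFn]
    · intro r h1 h2
      rw [List.getElem_ofFn]
      rcases Nat.even_or_odd r with ⟨i0, hi0⟩ | ⟨i0, hi0⟩
      · have hr : r = 2 * i0 := by omega
        subst hr
        have hi : i0 < n := by
          have := hflen (T σ) ▸ h1
          omega
        rw [flat_getElem_even (List.ofFn (T σ)) i0 (by simpa using hi)]
        rw [List.getElem_ofFn]
      · have hr : r = 2 * i0 + 1 := by omega
        subst hr
        have hi : i0 < n := by
          have := hflen (T σ) ▸ h1
          omega
        rw [flat_getElem_odd (List.ofFn (T σ)) i0 (by simpa using hi)]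
        rw [List.getElem_ofFn]
  have hprodT : ∀ σ : Equiv.Perm (Fin (2 * n)),
      ((((List.ofFn (T σ)).flatMap fun p => [p.1, p.2]).map θ).prod)
        = ((Equiv.Perm.sign σ : ℤ) : ℂ) • gmonomial θ Finset.univ := by
    intro σ
    rw [hLT σ, gmonomial_univ]
    have hmo : (List.ofFn ⇑σ).map θ = List.ofFn fun j => θ (σ j) := List.map_ofFn (f := ⇑σ) (g := θ)
    rw [hmo, sign_ofFn_prod θ hθ σ]
  -- the main sum over sequences of pairs
  have hsum_n : ∑ t : Fin n → Fin (2 * n) × Fin (2 * n),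
      ber ((∏ i, M (t i).1 (t i).2) •
        ((((List.ofFn t).flatMap fun p => [p.1, p.2]).map θ).prod))
      = ∑ σ : Equiv.Perm (Fin (2 * n)),
          ((Equiv.Perm.sign σ : ℤ) : ℂ) *
            ∏ i : Fin n, M (σ ⟨2 * (i : ℕ), by omega⟩) (σ ⟨2 * (i : ℕ) + 1, by omega⟩) := by
    rw [← Finset.sum_filter_of_ne
      (p := fun t : Fin n → Fin (2 * n) × Fin (2 * n) =>
        ((List.ofFn t).flatMap fun p => [p.1, p.2]).Nodup)
      (by
        intro t _ hne
        by_contra hnd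
        exact hne (by rw [hzero t hnd, smul_zero, map_zero]))]
    refine (Finset.sum_bij (fun σ _ => T σ) ?_ ?_ ?_ ?_).symm
    · -- maps into the filter
      intro σ _
      rw [Finset.mem_filter]
      exact ⟨Finset.mem_univ _, by rw [hLT σ]; exact List.nodup_ofFn.2 σ.injective⟩
    · -- injectivity
      intro σ1 _ σ2 _ hEq
      have hEq' : T σ1 = T σ2 := hEq
      have h3 : List.ofFn ⇑σ1 = List.ofFn ⇑σ2 := by
        rw [← hLT σ1, ← hLT σ2, hEq']
      exact Equiv.coe_fn_injective (List.ofFn_injective h3)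
    · -- surjectivity
      intro t ht
      have hnd : ((List.ofFn t).flatMap fun p => [p.1, p.2]).Nodup :=
        (Finset.mem_filter.1 ht).2
      set l := (List.ofFn t).flatMap fun p => [p.1, p.2] with hl
      have hlen : l.length = 2 * n := hflen t
      have hf : ∀ r : Fin (2 * n), (r : ℕ) < l.length := by
        intro r; rw [hlen]; exact r.isLt
      set f : Fin (2 * n) → Fin (2 * n) := fun r => l[(r : ℕ)]'(hf r) with hfd
      have hinj : Function.Injective f := by
        intro r1 r2 hr
        have := List.nodup_iff_injective_getElem.1 hnd
        have h4 := this (a₁ := ⟨(r1 : ℕ), hf r1⟩) (a₂ := ⟨(r2 : ℕ), hf r2⟩) hr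
        have h5 : (r1 : ℕ) = (r2 : ℕ) := by simpa using h4
        exact Fin.ext h5
      have hbij := Finite.injective_iff_bijective.1 hinj
      refine ⟨Equiv.ofBijective f hbij, Finset.mem_univ _, ?_⟩
      funext i
      have h5 : (i : ℕ) < (List.ofFn t).length := by
        rw [List.length_ofFn]; exact i.isLt
      apply Prod.ext
      · show f _ = (t i).1
        rw [hfd]
        have h6 := flat_getElem_even (List.ofFn t) (i : ℕ) h5 (by rw [hflen t]; omega)
        rw [List.getElem_ofFn] at h6
        simpa using h6
      · show f _ = (t i).2
        rw [hfd]
        have h6 := flat_getElem_odd (List.ofFn t) (i : ℕ) h5 (by rw [hflen t]; omega)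
        rw [List.getElem_ofFn] at h6
        simpa using h6
    · -- values agree
      intro σ _
      rw [hprodT σ, smul_smul, hber, if_pos rfl]
      rw [mul_comm]
  -- put everything together
  rw [map_sum, Finset.sum_eq_single_of_mem n (Finset.self_mem_range_succ n)]
  · rw [LinearMap.map_smul, hpow n, LinearMap.map_smul, map_sum, hsum_n]
    rw [pfaffian]
    simp only [smul_eq_mul]
    rw [show ((1 : ℂ) / 2) ^ n = ((2 : ℂ) ^ n)⁻¹ by rw [one_div, inv_pow], one_div, mul_inv]
    ring
  · intro b hb hbn
    have hblt : b < n := by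
      have := Finset.mem_range.1 hb
      omega
    rw [LinearMap.map_smul, hpow b, LinearMap.map_smul, map_sum,
      Finset.sum_eq_zero fun t _ => hsmall b hblt t]
    simp
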